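/- arXiv:2108.13469 — 3 statements merged into one kernel-verified Lean document; each statement's English description precedes it below -/
import Mathlib

section
/- Let V be a finite-dimensional vector space with two complete flags of subspaces. Given an (r+1)-dimensional subspace with prescribed distinct vanishing orders u_0<...<u_r with respect to the first flag and v_0>...>v_r with respect to the second, there exists a basis s_0,...,s_r of the subspace and a permutation σ of {0,...,r} such that s_j has vanishing order exactly u_j in the first flag and exactly v_{σ(j)} in the second flag. (Abstract version of Lemma on vanishing at two points: given a basis realizing the orders u_j at the first flag, finitely many elementary row operations produce a basis whose second-flag orders are all distinct.) -/
/-- Abstract two-flag version of the lemma on vanishing at two points: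
given an `(r+1)`-dimensional subspace `W` whose vanishing orders with respect to
a first flag `F` are `u₀ < ... < u_r` and with respect to a second flag `G` are
`v₀ > ... > v_r`, there is a basis `s₀,...,s_r` of `W` and a permutation `σ`
with `ord_F (s j) = u j` and `ord_G (s j) = v (σ j)`. -/
theorem stmt0 {K V : Type*} [Field K] [AddCommGroup V] [Module K V]
    [FiniteDimensional K V]
    (F G : ℕ → Submodule K V) (hF : Antitone F) (hG : Antitone G)
    (r : ℕ) (W : Submodule K V) (hW : Module.finrank K W = r + 1)
    (u v : Fin (r + 1) → ℕ)
    (hu : StrictMono u) (hv : StrictAnti v)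
    (hordF : ∀ s ∈ W, s ≠ 0 → ∃ j, s ∈ F (u j) ∧ s ∉ F (u j + 1))
    (hordG : ∀ s ∈ W, s ≠ 0 → ∃ j, s ∈ G (v j) ∧ s ∉ G (v j + 1))
    (hreF : ∀ j, ∃ s ∈ W, s ∈ F (u j) ∧ s ∉ F (u j + 1))
    (hreG : ∀ j, ∃ s ∈ W, s ∈ G (v j) ∧ s ∉ G (v j + 1)) :
    ∃ (s : Fin (r + 1) → V) (σ : Equiv.Perm (Fin (r + 1))),
      (∀ j, s j ∈ W) ∧ LinearIndependent K s ∧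
      Submodule.span K (Set.range s) = W ∧
      (∀ j, s j ∈ F (u j) ∧ s j ∉ F (u j + 1)) ∧
      (∀ j, s j ∈ G (v (σ j)) ∧ s j ∉ G (v (σ j) + 1)) := by
  classical
  -- uniqueness of the G-order index
  have huniq : ∀ (x : V) (j k : Fin (r + 1)), x ∈ G (v j) → x ∉ G (v j + 1) →
      x ∈ G (v k) → x ∉ G (v k + 1) → j = k := by
    intro x j k hj hj' hk hk'
    by_contra hne
    rcases lt_or_gt_of_ne hne with h | h
    · exact hk' (hG (by have := hv h; omega) hj)
    · exact hj' (hG (by have := hv h; omega) hk)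
  -- the chain D j = W ⊓ G (v j)
  set D : Fin (r + 1) → Submodule K V := fun j => W ⊓ G (v j) with hD
  have hDmono : StrictMono D := by
    intro j k hjk
    rw [SetLike.lt_iff_le_and_exists]
    constructor
    · exact inf_le_inf_left W (hG (le_of_lt (hv hjk)))
    · obtain ⟨s, hsW, hs1, hs2⟩ := hreG k
      refine ⟨s, ⟨hsW, hs1⟩, fun hs => hs2 (hG ?_ hs.2)⟩
      have := hv hjk; omega
  have hfr : ∀ j : Fin (r + 1), Module.finrank K (D j) = (j : ℕ) + 1 := by
    have hlow : ∀ j : Fin (r + 1), (j : ℕ) + 1 ≤ Module.finrank K (D j) := by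
      intro j
      induction j using Fin.induction with
      | zero =>
        obtain ⟨s, hsW, hs1, hs2⟩ := hreG 0
        have hs0 : s ≠ 0 := fun h => hs2 (h ▸ (G (v 0 + 1)).zero_mem)
        have hne : D 0 ≠ ⊥ := by
          intro h
          have : s ∈ D 0 := ⟨hsW, hs1⟩
          rw [h, Submodule.mem_bot] at this
          exact hs0 this
        have : Module.finrank K (D 0) ≠ 0 := by
          rw [Ne, Submodule.finrank_eq_zero]; exact hne
        simpa using Nat.one_le_iff_ne_zero.mpr this
      | succ j ih =>
        have h1 : Module.finrank K (D j.castSucc) < Module.finrank K (D j.succ) :=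
          Submodule.finrank_lt_finrank_of_lt (hDmono Fin.castSucc_lt_succ)
        simp only [Fin.coe_castSucc] at ih
        simp only [Fin.val_succ]
        omega
    have hup : ∀ j : Fin (r + 1), Module.finrank K (D j) + (r - (j : ℕ)) ≤ r + 1 := by
      intro j
      induction j using Fin.reverseInduction with
      | last =>
        have hle : D (Fin.last r) ≤ W := inf_le_left
        have := Submodule.finrank_mono hle
        rw [hW] at this
        simpa using this
      | cast j ih =>
        have h1 : Module.finrank K (D j.castSucc) < Module.finrank K (D j.succ) :=
          Submodule.finrank_lt_finrank_of_lt (hDmono Fin.castSucc_lt_succ)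
        simp only [Fin.val_succ] at ih
        simp only [Fin.coe_castSucc]
        have hjr : (j : ℕ) < r := j.isLt
        omega
    intro j
    have h1 := hlow j
    have h2 := hup j
    have h3 : (j : ℕ) ≤ r := Fin.is_le j
    omega
  -- lower bound for the rank of W ⊓ G (v m + 1)
  have hBfr : ∀ m : Fin (r + 1), (m : ℕ) ≤ Module.finrank K (W ⊓ G (v m + 1) : Submodule K V) := by
    intro m
    rcases Nat.eq_zero_or_pos (m : ℕ) with h0 | hpos
    · rw [h0]; exact Nat.zero_le _
    · have hm'r : (m : ℕ) - 1 < r + 1 := by have := m.isLt; omega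
      set m' : Fin (r + 1) := ⟨(m : ℕ) - 1, hm'r⟩ with hm'
      have hm'lt : m' < m := by rw [Fin.lt_def]; show (m : ℕ) - 1 < m; omega
      have hvlt : v m + 1 ≤ v m' := by have := hv hm'lt; omega
      have hle : D m' ≤ W ⊓ G (v m + 1) :=
        le_inf inf_le_left (le_trans inf_le_right (hG hvlt))
      have := Submodule.finrank_mono hle
      rw [hfr m'] at this
      simp only [hm'] at this
      omega
  -- key lemma: row operation
  have hkey : ∀ (m : Fin (r + 1)) (x y : V), x ∈ W → y ∈ W → x ∈ G (v m) → x ∉ G (v m + 1) →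
      y ∈ G (v m) → y ∉ G (v m + 1) → ∃ c : K, x - c • y ∈ G (v m + 1) := by
    intro m x y hxW hyW hx1 hx2 hy1 hy2
    set B : Submodule K V := W ⊓ G (v m + 1) with hB
    have hyA : y ∈ D m := ⟨hyW, hy1⟩
    have hyB : y ∉ B := fun h => hy2 h.2
    have hBA : B ≤ D m := inf_le_inf_left W (hG (Nat.le_succ _))
    have hsub : B ⊔ Submodule.span K {y} ≤ D m :=
      sup_le hBA ((Submodule.span_singleton_le_iff_mem y (D m)).mpr hyA)
    have hlt : B < B ⊔ Submodule.span K {y} := by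
      refine lt_of_le_of_ne le_sup_left (fun h => hyB ?_)
      rw [h]
      exact Submodule.mem_sup_right (Submodule.mem_span_singleton_self y)
    have h1 : Module.finrank K (D m) ≤ Module.finrank K (B ⊔ Submodule.span K {y} : Submodule K V) := by
      have hstep := Submodule.finrank_lt_finrank_of_lt hlt
      have h2 := hBfr m
      rw [← hB] at h2
      rw [hfr m]
      omega
    have hAeq : B ⊔ Submodule.span K {y} = D m := Submodule.eq_of_le_of_finrank_le hsub h1
    have hx : x ∈ B ⊔ Submodule.span K {y} := by
      rw [hAeq]; exact ⟨hxW, hx1⟩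
    obtain ⟨b, hb, z, hz, hbz⟩ := Submodule.mem_sup.mp hx
    obtain ⟨c, rfl⟩ := Submodule.mem_span_singleton.mp hz
    refine ⟨c, ?_⟩
    have : x - c • y = b := by rw [← hbz]; abel
    rw [this]
    exact hb.2
  -- linear independence from distinct F-orders
  have hliF : ∀ t : Fin (r + 1) → V, (∀ j, t j ∈ F (u j)) → (∀ j, t j ∉ F (u j + 1)) →
      LinearIndependent K t := by
    intro t ht1 ht2
    rw [Fintype.linearIndependent_iff]
    intro g hg
    by_contra hgne
    push_neg at hgne
    obtain ⟨i₀, hi₀⟩ := hgne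
    set S : Finset (Fin (r + 1)) := Finset.univ.filter (fun i => g i ≠ 0) with hS
    have hSne : S.Nonempty := ⟨i₀, by simp [hS, hi₀]⟩
    set i0 := S.min' hSne with hi0
    have hgi0 : g i0 ≠ 0 := by
      have := S.min'_mem hSne
      simp only [hS, Finset.mem_filter] at this
      exact this.2
    have hmem0 : g i0 • t i0 ∈ F (u i0 + 1) := by
      have h' := Finset.add_sum_erase Finset.univ (fun i => g i • t i) (Finset.mem_univ i0)
      rw [hg] at h'
      have hsum : g i0 • t i0 = -∑ i ∈ Finset.univ.erase i0, g i • t i :=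
        eq_neg_of_add_eq_zero_left h'
      rw [hsum]
      refine Submodule.neg_mem _ (Submodule.sum_mem _ ?_)
      intro k hk
      rcases eq_or_ne (g k) 0 with h0 | h0
      · simp [h0]
      · have hkS : k ∈ S := by simp [hS, h0]
        have hik : i0 < k :=
          (S.min'_le k hkS).lt_of_ne (Ne.symm (Finset.ne_of_mem_erase hk))
        have hule : u i0 + 1 ≤ u k := hu hik
        exact Submodule.smul_mem _ _ (hF hule (ht1 k))
    refine ht2 i0 ?_
    have htval : t i0 = (g i0)⁻¹ • (g i0 • t i0) := by
      rw [smul_smul, inv_mul_cancel₀ hgi0, one_smul]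
    rw [htval]
    exact Submodule.smul_mem _ _ hmem0
  -- choose the index function
  choose idx hidx using hordG
  -- main induction on the sum of G-order indices
  have main : ∀ (N : ℕ) (s : Fin (r + 1) → V) (hmem : ∀ j, s j ∈ W)
      (hli : LinearIndependent K s)
      (hFs : ∀ j, s j ∈ F (u j) ∧ s j ∉ F (u j + 1)),
      (∑ j, ((idx (s j) (hmem j) (hli.ne_zero j) : Fin (r + 1)) : ℕ)) ≤ N →
      ∃ (s' : Fin (r + 1) → V) (σ : Equiv.Perm (Fin (r + 1))),
        (∀ j, s' j ∈ W) ∧ LinearIndependent K s' ∧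
        Submodule.span K (Set.range s') = W ∧
        (∀ j, s' j ∈ F (u j) ∧ s' j ∉ F (u j + 1)) ∧
        (∀ j, s' j ∈ G (v (σ j)) ∧ s' j ∉ G (v (σ j) + 1)) := by
    intro N
    induction N using Nat.strong_induction_on with
    | _ N IH =>
      intro s hmem hli hFs hsum
      by_cases hinj : Function.Injective (fun k => idx (s k) (hmem k) (hli.ne_zero k))
      · -- done: the indices give a permutation
        have hbij := Finite.injective_iff_bijective.mp hinj
        refine ⟨s, Equiv.ofBijective _ hbij, hmem, hli, ?_, hFs,
          fun j => hidx (s j) (hmem j) (hli.ne_zero j)⟩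
        · -- span = W
          have hle : Submodule.span K (Set.range s) ≤ W := by
            rw [Submodule.span_le]
            rintro x ⟨k, rfl⟩
            exact hmem k
          have hcard : Module.finrank K (Submodule.span K (Set.range s)) = r + 1 := by
            rw [finrank_span_eq_card hli]
            simp
          exact Submodule.eq_of_le_of_finrank_le hle (by rw [hW, hcard])
      · -- a row operation decreases the index sum
        rw [Function.not_injective_iff] at hinj
        obtain ⟨a, b, hab, hneab⟩ := hinj
        obtain ⟨i, j, hij, hτ⟩ : ∃ i j, i < j ∧
            idx (s i) (hmem i) (hli.ne_zero i) = idx (s j) (hmem j) (hli.ne_zero j) := by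
          rcases lt_or_gt_of_ne hneab with h | h
          exacts [⟨a, b, h, hab⟩, ⟨b, a, h, hab.symm⟩]
        set m := idx (s i) (hmem i) (hli.ne_zero i) with hm
        have hIi := hidx (s i) (hmem i) (hli.ne_zero i)
        have hIj := hidx (s j) (hmem j) (hli.ne_zero j)
        rw [← hτ] at hIj
        obtain ⟨c, hc⟩ := hkey m (s i) (s j) (hmem i) (hmem j) hIi.1 hIi.2 hIj.1 hIj.2
        set s' : Fin (r + 1) → V := Function.update s i (s i - c • s j) with hs'
        have hji : j ≠ i := hij.ne'
        have hs'i : s' i = s i - c • s j := Function.update_self i _ s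
        have hs'k : ∀ k, k ≠ i → s' k = s k := fun k hk => Function.update_of_ne hk _ s
        have hmem' : ∀ k, s' k ∈ W := by
          intro k
          rcases eq_or_ne k i with rfl | hk
          · rw [hs'i]; exact Submodule.sub_mem _ (hmem k) (Submodule.smul_mem _ _ (hmem j))
          · rw [hs'k k hk]; exact hmem k
        -- span is preserved
        have hspan : Submodule.span K (Set.range s') = Submodule.span K (Set.range s) := by
          apply le_antisymm
          · rw [Submodule.span_le]
            rintro x ⟨k, rfl⟩
            rcases eq_or_ne k i with rfl | hk
            · rw [hs'i]
              exact Submodule.sub_mem _ (Submodule.subset_span ⟨k, rfl⟩)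
                (Submodule.smul_mem _ _ (Submodule.subset_span ⟨j, rfl⟩))
            · rw [hs'k k hk]; exact Submodule.subset_span ⟨k, rfl⟩
          · rw [Submodule.span_le]
            rintro x ⟨k, rfl⟩
            rcases eq_or_ne k i with rfl | hk
            · have : s k = s' k + c • s' j := by
                rw [hs'i, hs'k j hji]; abel
              rw [this]
              exact Submodule.add_mem _ (Submodule.subset_span ⟨k, rfl⟩)
                (Submodule.smul_mem _ _ (Submodule.subset_span ⟨j, rfl⟩))
            · rw [← hs'k k hk]; exact Submodule.subset_span ⟨k, rfl⟩
        have hli' : LinearIndependent K s' := by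
          rw [linearIndependent_iff_card_eq_finrank_span]
          have h1 : (Set.range s').finrank K = (Set.range s).finrank K := by
            unfold Set.finrank
            rw [hspan]
          rw [h1, ← linearIndependent_iff_card_eq_finrank_span]
          exact hli
        have hFs' : ∀ k, s' k ∈ F (u k) ∧ s' k ∉ F (u k + 1) := by
          intro k
          rcases eq_or_ne k i with rfl | hk
          · have huij : u k + 1 ≤ u j := hu hij
            have hsjF : s j ∈ F (u k + 1) := hF huij (hFs j).1
            constructor
            · rw [hs'i]
              exact Submodule.sub_mem _ (hFs k).1
                (Submodule.smul_mem _ _ (hF (Nat.le_succ _) hsjF))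
            · rw [hs'i]
              intro h
              apply (hFs k).2
              have : s k = (s k - c • s j) + c • s j := by abel
              rw [this]
              exact Submodule.add_mem _ h (Submodule.smul_mem _ _ hsjF)
          · rw [hs'k k hk]; exact hFs k
        -- the index of s' i strictly decreased, others unchanged
        have hidx_eq : ∀ k, k ≠ i →
            idx (s' k) (hmem' k) (hli'.ne_zero k) = idx (s k) (hmem k) (hli.ne_zero k) := by
          intro k hk
          have h1 := hidx (s' k) (hmem' k) (hli'.ne_zero k)
          have h2 := hidx (s k) (hmem k) (hli.ne_zero k)
          generalize hJ : idx (s' k) (hmem' k) (hli'.ne_zero k) = J at h1 ⊢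
          rw [hs'k k hk] at h1
          exact huniq (s k) _ _ h1.1 h1.2 h2.1 h2.2
        have hidx_lt : (idx (s' i) (hmem' i) (hli'.ne_zero i) : ℕ) < (m : ℕ) := by
          by_contra hge
          push_neg at hge
          have h1 := hidx (s' i) (hmem' i) (hli'.ne_zero i)
          apply h1.2
          have hvle : v (idx (s' i) (hmem' i) (hli'.ne_zero i)) + 1 ≤ v m + 1 := by
            rcases eq_or_lt_of_le hge with heq | hlt
            · have : idx (s' i) (hmem' i) (hli'.ne_zero i) = m := Fin.ext heq.symm
              rw [this]
            · have : m < idx (s' i) (hmem' i) (hli'.ne_zero i) := by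
                rw [Fin.lt_def]; exact hlt
              have := hv this; omega
          refine hG hvle ?_
          rw [hs'i]
          exact hc
        have hsum_lt : (∑ k, ((idx (s' k) (hmem' k) (hli'.ne_zero k) : Fin (r + 1)) : ℕ)) <
            (∑ k, ((idx (s k) (hmem k) (hli.ne_zero k) : Fin (r + 1)) : ℕ)) := by
          apply Finset.sum_lt_sum
          · intro k _
            rcases eq_or_ne k i with rfl | hk
            · exact le_of_lt hidx_lt
            · rw [hidx_eq k hk]
          · exact ⟨i, Finset.mem_univ i, hidx_lt⟩
        exact IH (∑ k, ((idx (s' k) (hmem' k) (hli'.ne_zero k) : Fin (r + 1)) : ℕ))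
          (by omega) s' hmem' hli' hFs' le_rfl
  -- initial basis from hreF
  choose t ht using hreF
  have ht1 : ∀ j, t j ∈ W := fun j => (ht j).1
  have ht2 : ∀ j, t j ∈ F (u j) := fun j => (ht j).2.1
  have ht3 : ∀ j, t j ∉ F (u j + 1) := fun j => (ht j).2.2
  have hli0 : LinearIndependent K t := hliF t ht2 ht3
  exact main (∑ j, ((idx (t j) (ht1 j) (hli0.ne_zero j) : Fin (r + 1)) : ℕ)) t ht1 hli0
    (fun j => ⟨ht2 j, ht3 j⟩) le_rfl
end

section
/- Let C be an elliptic curve with points P, Q such that P-Q is non-torsion, and integers 0 ≤ u_0 < ... < u_r ≤ d, d ≥ v_0 > ... > v_r ≥ 0. A necessary condition for existence of a line bundle L of degree d and an (r+1)-dimensional space V ⊆ H^0(L) with dim V(-u_jP) ≥ j+1 and dim V(-v_jQ) ≥ r+1-j for all j is: u_j + v_j ≤ d for all j, with equality for at most one j. -/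
/-- Necessary condition for existence of a linear series on an elliptic curve
with prescribed vanishing at two points `P, Q` with `P - Q` non-torsion:
`u_j + v_j ≤ d` for all `j`, with equality for at most one `j`.
The elliptic curve is modelled by its Picard group `Pic` with degree `deg` and
a function `h0` computing dimensions of spaces of sections; the flags
`FP, FQ` of subspaces of sections vanishing at `P, Q` are tied to `h0`. -/
theorem stmt5 {K H Pic : Type*} [Field K] [AddCommGroup H] [Module K H]
    [FiniteDimensional K H] [AddCommGroup Pic]
    (deg : Pic →+ ℤ) (h0 : Pic → ℕ)
    (hneg : ∀ M : Pic, deg M < 0 → h0 M = 0)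
    (hzero : ∀ M : Pic, deg M = 0 → ((M = 0 → h0 M = 1) ∧ (M ≠ 0 → h0 M = 0)))
    (OP OQ : Pic) (hP : deg OP = 1) (hQ : deg OQ = 1)
    (hnt : ∀ n : ℤ, n ≠ 0 → n • (OP - OQ) ≠ 0)
    (d r : ℕ) (L : Pic) (hL : deg L = d)
    (FP FQ : ℕ → Submodule K H)
    (hdim : ∀ m n : ℕ,
      Module.finrank K ↥(FP m ⊓ FQ n) ≤ h0 (L - (m : ℤ) • OP - (n : ℤ) • OQ))
    (u v : Fin (r + 1) → ℕ)
    (hu : StrictMono u) (hv : StrictAnti v)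
    (hur : u (Fin.last r) ≤ d) (hv0 : v 0 ≤ d)
    (V : Submodule K H) (hVdim : Module.finrank K V = r + 1)
    (hVP : ∀ j : Fin (r + 1), (j : ℕ) + 1 ≤ Module.finrank K ↥(V ⊓ FP (u j)))
    (hVQ : ∀ j : Fin (r + 1), r + 1 - (j : ℕ) ≤ Module.finrank K ↥(V ⊓ FQ (v j))) :
    (∀ j, u j + v j ≤ d) ∧
    (∀ j₁ j₂, u j₁ + v j₁ = d → u j₂ + v j₂ = d → j₁ = j₂) := by
  have key : ∀ j : Fin (r+1), 1 ≤ h0 (L - (u j : ℤ) • OP - (v j : ℤ) • OQ) := by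
    intro j
    have h1 := hVP j
    have h2 := hVQ j
    have hsum := Submodule.finrank_sup_add_finrank_inf_eq (V ⊓ FP (u j)) (V ⊓ FQ (v j))
    have hsup : Module.finrank K ↥((V ⊓ FP (u j)) ⊔ (V ⊓ FQ (v j))) ≤ r + 1 := by
      rw [← hVdim]
      exact Submodule.finrank_mono (sup_le inf_le_left inf_le_left)
    have hjr := j.isLt
    have hmono := Submodule.finrank_mono
      (inf_le_inf (inf_le_right : V ⊓ FP (u j) ≤ FP (u j))
        (inf_le_right : V ⊓ FQ (v j) ≤ FQ (v j)))
    have hd := hdim (u j) (v j)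
    omega
  have hdeg : ∀ j : Fin (r+1), deg (L - (u j : ℤ) • OP - (v j : ℤ) • OQ)
      = (d : ℤ) - u j - v j := by
    intro j
    simp [hL, hP, hQ]
  have hle : ∀ j, u j + v j ≤ d := by
    intro j
    by_contra hc
    have hneg' : deg (L - (u j : ℤ) • OP - (v j : ℤ) • OQ) < 0 := by
      rw [hdeg]; push_cast; omega
    have := hneg _ hneg'
    have := key j
    omega
  refine ⟨hle, ?_⟩
  intro j₁ j₂ h1 h2
  by_contra hne
  have heq : ∀ j : Fin (r+1), u j + v j = d → L = (u j : ℤ) • OP + (v j : ℤ) • OQ := by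
    intro j hj
    have hd0 : deg (L - (u j : ℤ) • OP - (v j : ℤ) • OQ) = 0 := by
      rw [hdeg]; push_cast; omega
    have hk := key j
    by_contra hne'
    have hM : L - (u j : ℤ) • OP - (v j : ℤ) • OQ ≠ 0 := by
      intro h
      apply hne'
      rw [sub_sub, sub_eq_zero] at h
      exact h
    have := (hzero _ hd0).2 hM
    omega
  have e := (heq j₁ h1).symm.trans (heq j₂ h2)
  have hn : ((u j₁ : ℤ) - u j₂) ≠ 0 := by
    have : u j₁ ≠ u j₂ := fun h => hne (hu.injective h)
    intro h
    exact this (by exact_mod_cast sub_eq_zero.mp h)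
  refine hnt _ hn ?_ |>.elim
  have hv' : (v j₂ : ℤ) = (u j₁ : ℤ) - u j₂ + v j₁ := by push_cast; omega
  rw [hv'] at e
  linear_combination (norm := module) e
end

section
/- In an admissible filling of a skew shape, for each i the threshold rows satisfy L_j^i ≤ L_j^{i-1} + 1 for every column j, and for fixed i, equality L_j^i = L_j^{i-1} + 1 holds for at most one j. Consequently the vanishing orders u_j^i = j+i-1-L_j^{i-1} and v_j^i = d - u_j^{i+1} satisfy u_j^i + v_j^i ≤ d, with equality for at most one j for each fixed i. -/
/-- If `w i j c = 0` and weights are decreasing in `b` and 0/1-valued,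
then `w i j b = 0` for all `b ≥ c`. -/
lemma stmt7_aux {r : ℕ} (w : ℕ → Fin (r + 1) → ℤ → ℤ)
    (hw01 : ∀ i j b, w i j b = 0 ∨ w i j b = 1)
    (hbelow : ∀ i j b, w i j (b + 1) ≤ w i j b)
    (i : ℕ) (j : Fin (r + 1)) (c b : ℤ) (h0 : w i j c = 0) (hb : c ≤ b) :
    w i j b = 0 := by
  obtain ⟨n, rfl⟩ := Int.le.dest hb
  induction n with
  | zero => simpa using h0
  | succ n ih =>
    have h1 : w i j (c + n + 1) ≤ w i j (c + n) := hbelow i j (c + n)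
    rw [ih (le_add_of_nonneg_right (Int.natCast_nonneg n))] at h1
    have := hw01 i j (c + n + 1)
    push_cast
    rcases this with h | h
    · rw [← h]; ring_nf
    · omega

/-- In an admissible filling, the thresholds satisfy `L_j^i ≤ L_j^{i-1} + 1`
with equality for at most one column `j` (for each fixed `i`); consequently
the vanishing orders `u_j^i = j+i-1-L_j^{i-1}`, `v_j^i = d - u_j^{i+1}` satisfy
`u_j^i + v_j^i ≤ d` with equality for at most one `j`. -/
theorem stmt7 (g r : ℕ) (d : ℤ)
    (entry : ℕ → Fin (r + 1) → ℤ → ℤ)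
    (hentry : ∀ i j b, entry i j b = -1 ∨ entry i j b = 0 ∨ entry i j b = 1)
    (ha : ∀ i (j₁ j₂ : Fin (r + 1)) (b₁ b₂ : ℤ),
      entry i j₁ b₁ = 1 → entry i j₂ b₂ = 1 → j₁ = j₂ ∧ b₁ = b₂)
    (w : ℕ → Fin (r + 1) → ℤ → ℤ)
    (hw : ∀ i j b, w (i + 1) j b = w i j b + entry (i + 1) j b)
    (hw01 : ∀ i j b, w i j b = 0 ∨ w i j b = 1)
    (hbelow : ∀ i j b, w i j (b + 1) ≤ w i j b)
    (L : ℕ → Fin (r + 1) → ℤ)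
    (hL : ∀ i j, w i j (L i j) = 0 ∧ w i j (L i j - 1) = 1)
    (u v : ℕ → Fin (r + 1) → ℤ)
    (hu : ∀ i j, u i j = (j : ℤ) + i - 1 - L (i - 1) j)
    (hv : ∀ i j, v i j = d - u (i + 1) j) :
    ∀ i, 1 ≤ i →
      ((∀ j, L i j ≤ L (i - 1) j + 1) ∧
        (∀ j₁ j₂, L i j₁ = L (i - 1) j₁ + 1 → L i j₂ = L (i - 1) j₂ + 1 → j₁ = j₂)) ∧
      ((∀ j, u i j + v i j ≤ d) ∧
        (∀ j₁ j₂, u i j₁ + v i j₁ = d → u i j₂ + v i j₂ = d → j₁ = j₂)) := by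
  intro i hi
  obtain ⟨k, rfl⟩ : ∃ k, i = k + 1 := ⟨i - 1, (Nat.succ_pred_eq_of_pos hi).symm⟩
  have hk : k + 1 - 1 = k := rfl
  -- key inequality
  have key : ∀ j, L (k + 1) j ≤ L k j + 1 := by
    intro j
    by_contra h
    push_neg at h
    -- L (k+1) j ≥ L k j + 2
    set b := L (k + 1) j - 1 with hb
    have hb1 : L k j + 1 ≤ b := by omega
    have hz1 : w k j b = 0 :=
      stmt7_aux w hw01 hbelow k j (L k j) b (hL k j).1 (by omega)
    have hz2 : w k j (b - 1) = 0 :=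
      stmt7_aux w hw01 hbelow k j (L k j) (b - 1) (hL k j).1 (by omega)
    have e1 : entry (k + 1) j b = 1 := by
      have := hw k j b
      have hw1 : w (k + 1) j b = 1 := (hL (k + 1) j).2
      omega
    have hwb1 : w (k + 1) j (b - 1) = 1 := by
      have h1 : w (k + 1) j b ≤ w (k + 1) j (b - 1) := by
        have := hbelow (k + 1) j (b - 1)
        simpa using this
      have hw1 : w (k + 1) j b = 1 := (hL (k + 1) j).2
      have := hw01 (k + 1) j (b - 1)
      omega
    have e2 : entry (k + 1) j (b - 1) = 1 := by
      have := hw k j (b - 1)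
      omega
    have := (ha (k + 1) j j b (b - 1) e1 e2).2
    omega
  -- equality uniqueness
  have keyeq : ∀ j, L (k + 1) j = L k j + 1 → entry (k + 1) j (L k j) = 1 := by
    intro j hj
    have hw1 : w (k + 1) j (L (k + 1) j - 1) = 1 := (hL (k + 1) j).2
    rw [hj] at hw1
    simp only [add_sub_cancel_right] at hw1
    have hz : w k j (L k j) = 0 := (hL k j).1
    have := hw k j (L k j)
    omega
  have uniq : ∀ j₁ j₂, L (k + 1) j₁ = L k j₁ + 1 → L (k + 1) j₂ = L k j₂ + 1 → j₁ = j₂ := by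
    intro j₁ j₂ h1 h2
    exact (ha (k + 1) j₁ j₂ (L k j₁) (L k j₂) (keyeq j₁ h1) (keyeq j₂ h2)).1
  refine ⟨⟨by simpa [hk] using key, by simpa [hk] using uniq⟩, ?_, ?_⟩
  · intro j
    have h1 := hu (k + 1) j
    have h2 := hv (k + 1) j
    have h3 := hu (k + 1 + 1) j
    have hk2 : k + 1 + 1 - 1 = k + 1 := rfl
    rw [hk2] at h3
    rw [hk] at h1
    have := key j
    push_cast at h1 h3
    omega
  · intro j₁ j₂ he1 he2
    apply uniq
    · have h1 := hu (k + 1) j₁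
      have h2 := hv (k + 1) j₁
      have h3 := hu (k + 1 + 1) j₁
      have hk2 : k + 1 + 1 - 1 = k + 1 := rfl
      rw [hk2] at h3; rw [hk] at h1
      push_cast at h1 h3
      omega
    · have h1 := hu (k + 1) j₂
      have h2 := hv (k + 1) j₂
      have h3 := hu (k + 1 + 1) j₂
      have hk2 : k + 1 + 1 - 1 = k + 1 := rfl
      rw [hk2] at h3; rw [hk] at h1
      push_cast at h1 h3
      omega
end
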